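/- Let n be an odd integer with n > 3, let d be a divisor of n with d > 1, and let q ≥ 2 be an integer. Set e = (n/d)·(n−2)·(d−1)/2 (an integer, since d is odd). Then ∏_{j=1}^{n} (q^{j} − 1) > q^{e} · ∏_{j=1}^{n/d} (q^{jd} − 1), and moreover q^{e} > n; in particular ∏_{j=1}^{n}(q^j − 1) > n · ∏_{j=1}^{n/d}(q^{jd} − 1). -/
import Mathlib

lemma aux_pow_gt (k : ℕ) : k + 5 < 2 ^ (k + 3) := by
  induction k with
  | zero => norm_num
  | succ k ih =>
    have : 2 ^ (k + 1 + 3) = 2 * 2 ^ (k + 3) := by ring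
    omega

set_option maxHeartbeats 1600000 in
/-- Let `n` be an odd integer with `n > 3`, let `d` be a divisor of `n` with `d > 1`, and
let `q ≥ 2` be an integer. Set `e = (n/d)·(n−2)·(d−1)/2` (an integer, since `d` is odd).
Then `∏_{j=1}^{n} (q^j − 1) > q^e · ∏_{j=1}^{n/d} (q^{jd} − 1)`, and moreover `q^e > n`;
in particular `∏_{j=1}^{n} (q^j − 1) > n · ∏_{j=1}^{n/d} (q^{jd} − 1)`. -/
theorem stmt_13 (n d : ℕ) (hn : Odd n) (hn3 : 3 < n) (hd : d ∣ n) (hd1 : 1 < d)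
    (q : ℤ) (hq : 2 ≤ q) (e : ℕ) (he : e = n / d * (n - 2) * (d - 1) / 2) :
    (q ^ e * ∏ j ∈ Finset.Icc 1 (n / d), (q ^ (j * d) - 1) <
        ∏ j ∈ Finset.Icc 1 n, (q ^ j - 1)) ∧
      (n : ℤ) < q ^ e ∧
      (n : ℤ) * ∏ j ∈ Finset.Icc 1 (n / d), (q ^ (j * d) - 1) <
        ∏ j ∈ Finset.Icc 1 n, (q ^ j - 1) := by
  classical
  set m := n / d with hm
  have hdo : Odd d := by
    rcases Nat.even_or_odd d with hev | hod
    · exfalso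
      obtain ⟨c, hc⟩ := hd
      exact (Nat.not_even_iff_odd.mpr hn) (hc ▸ hev.mul_right c)
    · exact hod
  obtain ⟨c, hc⟩ := hdo
  have hd3 : 3 ≤ d := by omega
  have hmd : m * d = n := Nat.div_mul_cancel hd
  have hm1 : 1 ≤ m := (Nat.one_le_div_iff (by omega)).mpr (Nat.le_of_dvd (by omega) hd)
  have hn5 : 5 ≤ n := by
    obtain ⟨k, hk⟩ := hn; omega
  -- the filter sets
  set t := (Finset.Icc 1 n).filter (fun j => d ∣ j) with ht
  set u := (Finset.Icc 1 n).filter (fun j => ¬ d ∣ j) with hu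
  -- image description of t
  have himg : (Finset.Icc 1 m).image (· * d) = t := by
    ext j
    simp only [Finset.mem_image, Finset.mem_filter, Finset.mem_Icc, ht]
    constructor
    · rintro ⟨a, ⟨ha1, ham⟩, rfl⟩
      refine ⟨⟨Nat.mul_pos (by omega) (by omega), ?_⟩, dvd_mul_left d a⟩
      calc a * d ≤ m * d := Nat.mul_le_mul_right d ham
        _ = n := hmd
    · rintro ⟨⟨hj1, hjn⟩, a, rfl⟩
      refine ⟨a, ⟨?_, ?_⟩, by ring⟩
      · rcases Nat.eq_zero_or_pos a with h | h
        · subst h; simp at hj1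
        · exact h
      · by_contra h; push_neg at h
        have h1 : d * (m + 1) ≤ d * a := Nat.mul_le_mul_left d h
        have h2 : d * (m + 1) = m * d + d := by ring
        omega
  have hinj : Set.InjOn (· * d) (Finset.Icc 1 m) := by
    intro a _ b _ hab
    exact Nat.eq_of_mul_eq_mul_right (by omega) hab
  -- exponent sums
  set Su := ∑ j ∈ u, (j - 1) with hSu
  set St := ∑ j ∈ t, (j - 1) with hSt
  set Sall := ∑ j ∈ Finset.Icc 1 n, (j - 1) with hSall
  have hsum : St + Su = Sall := Finset.sum_filter_add_sum_filter_not _ _ _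
  have h1 : Sall * 2 = n * (n - 1) := by
    have : Sall = ∑ i ∈ Finset.range n, i := by
      rw [hSall, ← Finset.Ico_add_one_right_eq_Icc, Finset.sum_Ico_eq_sum_range]
      simp
    rw [this, Finset.sum_range_id_mul_two]
  have h2a : St = ∑ a ∈ Finset.Icc 1 m, (a * d - 1) := by
    rw [hSt, ← himg, Finset.sum_image hinj]
  have hS2 : (∑ a ∈ Finset.Icc 1 m, (a : ℤ)) * 2 = m * (m + 1) := by
    have h0' : (∑ a ∈ Finset.Icc 1 m, a) = ∑ i ∈ Finset.range (m + 1), i := by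
      rw [← Finset.Ico_add_one_right_eq_Icc, Finset.sum_Ico_eq_sum_range, Finset.sum_range_succ']
      simp [add_comm]
    have h0 : (∑ a ∈ Finset.Icc 1 m, a) * 2 = m * (m + 1) := by
      rw [h0', Finset.sum_range_id_mul_two]
      simp
      ring
    have h0' := congrArg (Nat.cast : ℕ → ℤ) h0
    push_cast at h0'
    linear_combination h0'
  have hcast : (St : ℤ) = ∑ a ∈ Finset.Icc 1 m, ((a : ℤ) * d - 1) := by
    rw [h2a, Nat.cast_sum]
    refine Finset.sum_congr rfl fun a ha => ?_
    simp only [Finset.mem_Icc] at ha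
    have h1a : 1 ≤ a * d := Nat.mul_pos (by omega) (by omega)
    push_cast [Nat.cast_sub h1a]
    ring
  have hsplit2 : ∑ a ∈ Finset.Icc 1 m, ((a : ℤ) * d - 1) =
      (∑ a ∈ Finset.Icc 1 m, (a : ℤ)) * d - m := by
    rw [Finset.sum_sub_distrib, Finset.sum_mul]
    simp [Nat.card_Icc]
  have h2Z : (St : ℤ) * 2 + 2 * m = d * (m * (m + 1)) := by
    rw [hcast, hsplit2]
    linear_combination (d : ℤ) * hS2
  have h2e : 2 * e = m * (n - 2) * (d - 1) := by
    have hdc : d - 1 = 2 * c := by omega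
    rw [he, hdc]
    have : m * (n - 2) * (2 * c) = 2 * (m * (n - 2) * c) := by ring
    rw [this, Nat.mul_div_cancel_left _ (by norm_num)]
  -- key: Su = e
  have hkey : Su = e := by
    have hz : (Su : ℤ) * 2 = (e : ℤ) * 2 := by
      have hsumZ : (St : ℤ) + Su = Sall := by exact_mod_cast hsum
      have h1Z : (Sall : ℤ) * 2 = n * ((n : ℤ) - 1) := by
        have h' : ((Sall * 2 : ℕ) : ℤ) = ((n * (n - 1) : ℕ) : ℤ) := by exact_mod_cast h1
        push_cast [Nat.cast_sub (show 1 ≤ n by omega)] at h'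
        linarith
      have h2eZ : 2 * (e : ℤ) = (m : ℤ) * ((n : ℤ) - 2) * ((d : ℤ) - 1) := by
        have h' : ((2 * e : ℕ) : ℤ) = ((m * (n - 2) * (d - 1) : ℕ) : ℤ) := by
          exact_mod_cast congrArg (Nat.cast : ℕ → ℤ) h2e
        push_cast [Nat.cast_sub (show 2 ≤ n by omega), Nat.cast_sub (show 1 ≤ d by omega)] at h'
        linarith
      have hnZ : (n : ℤ) = m * d := by exact_mod_cast hmd.symm
      linear_combination 2 * hsumZ - h2Z + h1Z - h2eZ + ((n : ℤ) + m - 1) * hnZ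
    have : (Su : ℤ) = e := by linarith
    exact_mod_cast this
  -- product over t equals the d-power product
  have hPt : (∏ j ∈ t, (q ^ j - 1)) = ∏ j ∈ Finset.Icc 1 m, (q ^ (j * d) - 1) := by
    rw [← himg, Finset.prod_image hinj]
  -- split of the big product
  have hsplit : (∏ j ∈ t, (q ^ j - 1)) * (∏ j ∈ u, (q ^ j - 1)) =
      ∏ j ∈ Finset.Icc 1 n, (q ^ j - 1) :=
    Finset.prod_filter_mul_prod_filter_not _ _ _
  -- q^e as product over u
  have hq0 : (0 : ℤ) < q := by linarith
  have hqe : q ^ e = ∏ j ∈ u, q ^ (j - 1) := by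
    rw [Finset.prod_pow_eq_pow_sum, ← hSu, hkey]
  -- pointwise bounds on u
  have hposu : ∀ j ∈ u, (0 : ℤ) < q ^ (j - 1) := fun j _ => pow_pos hq0 _
  have hleu : ∀ j ∈ u, q ^ (j - 1) ≤ q ^ j - 1 := by
    intro j hj
    simp only [hu, Finset.mem_filter, Finset.mem_Icc] at hj
    have hj1 : 1 ≤ j := hj.1.1
    have h1q : (1 : ℤ) ≤ q ^ (j - 1) := by
      have := pow_le_pow_left₀ (by norm_num : (0:ℤ) ≤ 1) (show (1:ℤ) ≤ q by linarith) (j - 1)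
      simpa using this
    have hpow : q ^ j = q ^ (j - 1) * q := by
      rw [← pow_succ]; congr 1; omega
    have h2' : q ^ (j - 1) * 2 ≤ q ^ (j - 1) * q := by
      apply mul_le_mul_of_nonneg_left hq (by linarith)
    linarith
  have h2u : 2 ∈ u := by
    simp only [hu, Finset.mem_filter, Finset.mem_Icc]
    refine ⟨⟨by omega, by omega⟩, fun hdvd => ?_⟩
    have := Nat.le_of_dvd (by norm_num) hdvd
    omega
  have hstrict : ∃ j ∈ u, q ^ (j - 1) < q ^ j - 1 := by
    refine ⟨2, h2u, ?_⟩
    norm_num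
    nlinarith
  have hprodlt : (∏ j ∈ u, q ^ (j - 1)) < ∏ j ∈ u, (q ^ j - 1) :=
    Finset.prod_lt_prod hposu hleu hstrict
  -- positivity of the d-power product
  have hPpos : (0 : ℤ) < ∏ j ∈ Finset.Icc 1 m, (q ^ (j * d) - 1) := by
    apply Finset.prod_pos
    intro j hj
    simp only [Finset.mem_Icc] at hj
    have : (2 : ℤ) ^ (j * d) ≤ q ^ (j * d) := pow_le_pow_left₀ (by norm_num) hq _
    have h2 : (2 : ℤ) ^ 1 ≤ 2 ^ (j * d) := pow_le_pow_right₀ (by norm_num) (Nat.mul_pos hj.1 (by omega))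
    norm_num at h2
    linarith
  -- first inequality
  have hmain : q ^ e * ∏ j ∈ Finset.Icc 1 m, (q ^ (j * d) - 1) <
      ∏ j ∈ Finset.Icc 1 n, (q ^ j - 1) := by
    calc q ^ e * ∏ j ∈ Finset.Icc 1 m, (q ^ (j * d) - 1)
        = (∏ j ∈ t, (q ^ j - 1)) * (∏ j ∈ u, q ^ (j - 1)) := by
          rw [hqe, hPt]; ring
      _ < (∏ j ∈ t, (q ^ j - 1)) * (∏ j ∈ u, (q ^ j - 1)) := by
          apply mul_lt_mul_of_pos_left hprodlt
          rw [hPt]; exact hPpos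
      _ = _ := hsplit
  -- second inequality: n < q^e
  have hen : n - 2 ≤ e := by
    have : m * (n - 2) * (d - 1) ≥ 1 * (n - 2) * 2 := by
      apply Nat.mul_le_mul
      · exact Nat.mul_le_mul_right _ hm1
      · omega
    omega
  have hnq : (n : ℤ) < q ^ e := by
    have hp1 : (n : ℤ) < 2 ^ (n - 2) := by
      have := aux_pow_gt (n - 5)
      have h : n - 5 + 5 = n := by omega
      have h3 : n - 5 + 3 = n - 2 := by omega
      rw [h, h3] at this
      exact_mod_cast this
    have hp2 : (2 : ℤ) ^ (n - 2) ≤ 2 ^ e := pow_le_pow_right₀ (by norm_num) hen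
    have hp3 : (2 : ℤ) ^ e ≤ q ^ e := pow_le_pow_left₀ (by norm_num) hq _
    linarith
  refine ⟨hmain, hnq, ?_⟩
  calc (n : ℤ) * ∏ j ∈ Finset.Icc 1 m, (q ^ (j * d) - 1)
      < q ^ e * ∏ j ∈ Finset.Icc 1 m, (q ^ (j * d) - 1) :=
        mul_lt_mul_of_pos_right hnq hPpos
    _ < _ := hmain
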